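/- Let g_N(z) = ((z−1/2)/(1−z/2))^N. Then sup_{z∈𝔻}|g_N(z)| = 1 and, for N ≥ 10, min_{|z| = 1−1/N} |g_N(z)| ≥ e^{−4}. -/

import Mathlib

open Filter Topology

private lemma nsq1 (z : ℂ) : Complex.normSq (z - 1/2) = (z.re - 1/2)^2 + z.im^2 := by
  simp [Complex.normSq_apply, Complex.sub_re, Complex.sub_im]; ring

private lemma nsq2 (z : ℂ) : Complex.normSq (1 - z/2) = (1 - z.re/2)^2 + (z.im/2)^2 := by
  simp [Complex.normSq_apply, Complex.sub_re, Complex.sub_im, Complex.div_re, Complex.div_im,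
    Complex.normSq_apply]
  ring

private lemma absb_le_one {z : ℂ} (hz : ‖z‖ < 1) :
    ‖(z - 1/2) / (1 - z/2)‖ ≤ 1 := by
  have hn : Complex.normSq z < 1 := by
    have := Complex.sq_norm z
    nlinarith [norm_nonneg z]
  have hns : Complex.normSq z = z.re^2 + z.im^2 := by
    simp [Complex.normSq_apply]; ring
  have h1 := nsq1 z
  have h2 := nsq2 z
  have hle : Complex.normSq (z - 1/2) ≤ Complex.normSq (1 - z/2) := by nlinarith
  rw [norm_div]
  rcases eq_or_ne (1 - z/2) 0 with h | h
  · simp [h]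
  · rw [div_le_one (norm_pos_iff.mpr h)]
    have := Real.sqrt_le_sqrt hle
    rwa [← Complex.norm_def, ← Complex.norm_def] at this

private lemma absb_lower {z : ℂ} {r : ℝ} (hr1 : 1/2 < r) (hr2 : r < 1)
    (hz : ‖z‖ = r) :
    (r - 1/2) / (1 - r/2) ≤ ‖(z - 1/2) / (1 - z/2)‖ := by
  have hns : z.re^2 + z.im^2 = r^2 := by
    have := Complex.sq_norm z
    rw [hz] at this
    simpa [Complex.normSq_apply, sq] using this.symm
  have hxr : z.re ≤ r := by nlinarith [sq_nonneg z.im]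
  have h1 := nsq1 z
  have h2 := nsq2 z
  have key : ((r - 1/2)/(1 - r/2))^2 * Complex.normSq (1 - z/2) ≤ Complex.normSq (z - 1/2) := by
    rw [h1, h2, div_pow, div_mul_eq_mul_div, div_le_iff₀ (by nlinarith)]
    nlinarith [mul_nonneg (mul_nonneg (show (0:ℝ) ≤ 3/4 by norm_num)
      (show 0 ≤ 1 - r^2 by nlinarith)) (show 0 ≤ r - z.re by linarith)]
  have hc : 0 ≤ (r - 1/2)/(1 - r/2) := div_nonneg (by linarith) (by linarith)
  have habs : ((r - 1/2)/(1 - r/2) * ‖1 - z/2‖)^2 ≤ (‖z - 1/2‖)^2 := by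
    rw [mul_pow, Complex.sq_norm, Complex.sq_norm]; exact key
  have hden : (0:ℝ) < ‖1 - z/2‖ := by
    rw [← Complex.sq_norm] at *
    nlinarith [norm_nonneg (1 - z/2)]
  have hmul : (r - 1/2)/(1 - r/2) * ‖1 - z/2‖ ≤ ‖z - 1/2‖ := by
    have := Real.sqrt_le_sqrt habs
    rwa [Real.sqrt_sq (mul_nonneg hc (norm_nonneg _)),
      Real.sqrt_sq (norm_nonneg _)] at this
  rw [norm_div, le_div_iff₀ hden]
  exact hmul

private lemma exp_bound {N : ℕ} (hN : 10 ≤ N) :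
    Real.exp (-4) ≤ (((N:ℝ) - 2) / ((N:ℝ) + 1)) ^ N := by
  have hNR : (10:ℝ) ≤ N := by exact_mod_cast hN
  have hNpos : (0:ℝ) < N := by linarith
  have hA : (0:ℝ) < ((N:ℝ)+4)/N := by positivity
  have h2 : ((N:ℝ)+4)/N ≤ Real.exp (4/N) := by
    have h := Real.add_one_le_exp (4/(N:ℝ))
    have heq : ((N:ℝ)+4)/N = 4/N + 1 := by field_simp; ring
    linarith [heq ▸ h]
  have h3 : Real.exp (-(4/(N:ℝ))) ≤ (N:ℝ)/((N:ℝ)+4) := by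
    rw [Real.exp_neg]
    calc (Real.exp (4/(N:ℝ)))⁻¹ ≤ (((N:ℝ)+4)/N)⁻¹ := inv_anti₀ hA h2
      _ = (N:ℝ)/((N:ℝ)+4) := by rw [inv_div]
  have h4 : (N:ℝ)/((N:ℝ)+4) ≤ ((N:ℝ)-2)/((N:ℝ)+1) := by
    rw [div_le_div_iff₀ (by linarith) (by linarith)]; nlinarith
  have h5 : Real.exp (-4) = Real.exp (-(4/(N:ℝ))) ^ N := by
    rw [← Real.exp_nat_mul]
    congr 1
    field_simp
  rw [h5]
  exact pow_le_pow_left₀ (Real.exp_pos _).le (h3.trans h4) N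

private lemma lub_part (N : ℕ) :
    IsLUB ((fun z : ℂ => ‖((z - 1 / 2) / (1 - z / 2)) ^ N‖) ''
        Metric.ball (0 : ℂ) 1) 1 := by
  constructor
  · rintro x ⟨z, hz, rfl⟩
    have hz' : ‖z‖ < 1 := by
      simpa [Metric.mem_ball, dist_zero_right] using hz
    simp only [norm_pow]
    exact pow_le_one₀ (norm_nonneg _) (absb_le_one hz')
  · intro b hb
    have htu : Tendsto (fun k : ℕ => 1 - 1/((k:ℝ)+2)) atTop (𝓝 1) := by
      have : Tendsto (fun k : ℕ => 1/((k:ℝ)+2)) atTop (𝓝 0) := by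
        apply squeeze_zero (fun k => by positivity) (fun k => ?_)
          tendsto_one_div_add_atTop_nhds_zero_nat
        apply div_le_div_of_nonneg_left <;> norm_num
        positivity
      simpa using tendsto_const_nhds.sub this
    have hgc : ContinuousAt (fun r : ℝ => ((r - 1/2)/(1 - r/2))^N) 1 := by
      apply ContinuousAt.pow
      apply ContinuousAt.div (by fun_prop) (by fun_prop)
      norm_num
    have hg1 : ((((1:ℝ) - 1/2)/(1 - 1/2))^N) = 1 := by norm_num
    have htv := (hgc.tendsto).comp htu
    rw [hg1] at htv
    refine le_of_tendsto htv (Filter.Eventually.of_forall fun k => ?_)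
    simp only [Function.comp]
    obtain ⟨r, hr⟩ : ∃ r : ℝ, r = 1 - 1/((k:ℝ)+2) := ⟨_, rfl⟩
    rw [← hr]
    have h2 : (2:ℝ) ≤ (k:ℝ) + 2 := le_add_of_nonneg_left (Nat.cast_nonneg k)
    have hrk : 1/((k:ℝ)+2) ≤ 1/2 := by
      apply div_le_div_of_nonneg_left <;> norm_num
    have hrk0 : 0 < 1/((k:ℝ)+2) := by positivity
    have hka : 1/2 ≤ r := by rw [hr]; linarith
    have hkb : r < 1 := by rw [hr]; linarith
    have hmem : ((r : ℝ) : ℂ) ∈ Metric.ball (0:ℂ) 1 := by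
      simp only [Metric.mem_ball, dist_zero_right, Complex.norm_real, Real.norm_eq_abs]
      rw [abs_of_nonneg (by linarith)]
      exact hkb
    have hle := hb ⟨_, hmem, rfl⟩
    have h1 : (((r : ℝ):ℂ) - 1 / 2) / (1 - ((r:ℝ):ℂ) / 2)
        = (((r - 1/2)/(1 - r/2) : ℝ) : ℂ) := by push_cast; ring
    simp only [h1, ← Complex.ofReal_pow, Complex.norm_real, Real.norm_eq_abs] at hle
    rwa [abs_of_nonneg (pow_nonneg (div_nonneg (by linarith) (by linarith)) N)] at hle

/-- For `g_N(z) = ((z−1/2)/(1−z/2))^N`: `sup_{z ∈ 𝔻} |g_N(z)| = 1`, and for `N ≥ 10`,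
`min_{|z| = 1−1/N} |g_N(z)| ≥ e^{−4}`. -/
theorem stmt17 (N : ℕ) (hN : 10 ≤ N) :
    IsLUB ((fun z : ℂ => ‖((z - 1 / 2) / (1 - z / 2)) ^ N‖) ''
        Metric.ball (0 : ℂ) 1) 1
      ∧ ∀ z : ℂ, ‖z‖ = 1 - 1 / (N : ℝ) →
          Real.exp (-4) ≤ ‖((z - 1 / 2) / (1 - z / 2)) ^ N‖ := by
  refine ⟨lub_part N, fun z hz => ?_⟩
  have hNR : (10:ℝ) ≤ N := by exact_mod_cast hN
  have hNpos : (0:ℝ) < N := by linarith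
  have hNi : 1/(N:ℝ) ≤ 1/10 := by
    apply div_le_div_of_nonneg_left <;> linarith
  have hNi0 : 0 < 1/(N:ℝ) := by positivity
  have hr1 : 1/2 < 1 - 1/(N:ℝ) := by linarith
  have hr2 : 1 - 1/(N:ℝ) < 1 := by linarith
  have hlow := absb_lower hr1 hr2 hz
  have hcval : ((1 - 1/(N:ℝ)) - 1/2) / (1 - (1 - 1/(N:ℝ))/2) = ((N:ℝ) - 2)/((N:ℝ) + 1) := by
    rw [div_eq_div_iff (by linarith) (by linarith)]
    field_simp
    ring
  rw [hcval] at hlow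
  have hc0 : (0:ℝ) ≤ ((N:ℝ) - 2)/((N:ℝ) + 1) := div_nonneg (by linarith) (by linarith)
  calc Real.exp (-4) ≤ (((N:ℝ) - 2) / ((N:ℝ) + 1)) ^ N := exp_bound hN
    _ ≤ (‖(z - 1 / 2) / (1 - z / 2)‖) ^ N := pow_le_pow_left₀ hc0 hlow N
    _ = ‖((z - 1 / 2) / (1 - z / 2)) ^ N‖ := (norm_pow _ _).symm
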